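/- Let $f : X \to Y$ be barely continuous, let $F, F' \subseteq Y$ be disjoint closed sets. Then there exists an $H$-set $B \subseteq X$ with $f^{-1}(F) \subseteq B \subseteq X \setminus f^{-1}(F')$. -/

import Mathlib

open Filter Topology Set

/-- `A` is an `H`-set (resolvable in the sense of Hausdorff). -/
def HSet {X : Type*} [TopologicalSpace X] (A : Set X) : Prop :=
  ∀ F : Set X, IsClosed F →
    IsNowhereDense
      ((Subtype.val ⁻¹' (closure (F ∩ A) ∩ closure (F \ A))) : Set F)

/-- `f` is barely continuous. -/
def BarelyContinuous {X Y : Type*} [TopologicalSpace X] [TopologicalSpace Y]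
    (f : X → Y) : Prop :=
  ∀ F : Set X, IsClosed F → F.Nonempty → ∃ x ∈ F, ContinuousWithinAt f F x

universe u

/-- Transfinite iteration of a "derivative" operator on sets. -/
noncomputable def Aseq {X : Type u} (d : Set X → Set X) : Ordinal.{u} → Set X
  | o => ⋂ p : Set.Iio o, d (Aseq d p.1)
termination_by o => o
decreasing_by exact p.2

theorem mem_Aseq {X : Type u} (d : Set X → Set X) (o : Ordinal.{u}) (x : X) :
    x ∈ Aseq d o ↔ ∀ p < o, x ∈ d (Aseq d p) := by
  rw [Aseq]
  simp [Set.mem_iInter, Subtype.forall]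

theorem Aseq_antitone {X : Type u} (d : Set X → Set X) : Antitone (Aseq d) := by
  intro o o' h x hx
  rw [mem_Aseq] at hx ⊢
  exact fun p hp => hx p (lt_of_lt_of_le hp h)

theorem Aseq_succ_subset {X : Type u} (d : Set X → Set X) (o : Ordinal.{u}) :
    Aseq d (o + 1) ⊆ d (Aseq d o) := by
  intro x hx
  rw [mem_Aseq] at hx
  exact hx o (Order.lt_succ o)

theorem barelyContinuous_Hset_separation
    {X Y : Type*} [TopologicalSpace X] [TopologicalSpace Y]
    (f : X → Y) (hf : BarelyContinuous f)
    (F F' : Set Y) (hF : IsClosed F) (hF' : IsClosed F')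
    (hdisj : Disjoint F F') :
    ∃ B : Set X, HSet B ∧ f ⁻¹' F ⊆ B ∧ B ⊆ (f ⁻¹' F')ᶜ := by
  classical
  set E : Set X := f ⁻¹' F with hE
  set Hs : Set X := f ⁻¹' F' with hHs
  set d : Set X → Set X := fun A => closure (A ∩ E) ∩ closure (A ∩ Hs) with hd
  set A : Ordinal → Set X := Aseq d with hA
  -- each iterate is closed
  have hAcl : ∀ o, IsClosed (A o) := by
    intro o
    rw [hA, Aseq]
    exact isClosed_iInter fun p => (isClosed_closure.inter isClosed_closure)
  have hdsub : ∀ S : Set X, IsClosed S → d S ⊆ S := by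
    intro S hS x hx
    exact hS.closure_subset_iff.2 (inter_subset_left) hx.1
  -- strict decrease on nonempty closed sets, from bare continuity
  have hstrict : ∀ o, (A o).Nonempty → ∃ x ∈ A o, x ∉ d (A o) := by
    intro o hne
    obtain ⟨x, hxA, hxc⟩ := hf (A o) (hAcl o) hne
    have : f x ∉ F ∨ f x ∉ F' := by
      by_contra h
      push_neg at h
      exact (hdisj.ne_of_mem h.1 h.2) rfl
    rcases this with h | h
    · -- f x ∉ F : find a neighborhood of x avoiding A o ∩ E
      have hFc : Fᶜ ∈ nhds (f x) := hF.isOpen_compl.mem_nhds h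
      have := hxc hFc
      rw [mem_map, mem_nhdsWithin] at this
      obtain ⟨U, hU, hxU, hUsub⟩ := this
      refine ⟨x, hxA, fun hxd => ?_⟩
      have hx1 := hxd.1
      rw [mem_closure_iff] at hx1
      obtain ⟨z, hz⟩ := hx1 U hU hxU
      exact hUsub ⟨hz.1, hz.2.1⟩ hz.2.2
    · have hFc : F'ᶜ ∈ nhds (f x) := hF'.isOpen_compl.mem_nhds h
      have := hxc hFc
      rw [mem_map, mem_nhdsWithin] at this
      obtain ⟨U, hU, hxU, hUsub⟩ := this
      refine ⟨x, hxA, fun hxd => ?_⟩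
      have hx2 := hxd.2
      rw [mem_closure_iff] at hx2
      obtain ⟨z, hz⟩ := hx2 U hU hxU
      exact hUsub ⟨hz.1, hz.2.1⟩ hz.2.2
  -- the iteration terminates at ∅
  have hempty : ∃ o, A o = ∅ := by
    by_contra h
    push_neg at h
    have hinj : Function.Injective A := by
      have hssub : ∀ o, A (o + 1) ⊂ A o := by
        intro o
        obtain ⟨x, hxA, hxd⟩ := hstrict o (h o)
        refine ⟨Aseq_antitone d (le_of_lt (Order.lt_succ o)), fun hsub => ?_⟩
        exact hxd (Aseq_succ_subset d o (hsub hxA))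
      intro o o' hoo'
      by_contra hne
      rcases lt_or_gt_of_ne hne with hlt | hlt
      · have h1 : A o' ⊆ A (o + 1) := Aseq_antitone d (Order.succ_le_of_lt hlt)
        exact (hssub o).2 (by rw [hoo']; exact h1)
      · have h1 : A o ⊆ A (o' + 1) := Aseq_antitone d (Order.succ_le_of_lt hlt)
        exact (hssub o').2 (by rw [← hoo']; exact h1)
    exact not_injective_of_ordinal A hinj
  obtain ⟨o₀, ho₀⟩ := hempty
  -- the rank function g
  have hgne : ∀ x : X, {p : Ordinal | x ∉ d (A p)}.Nonempty := by
    intro x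
    have : x ∉ A o₀ := by rw [ho₀]; exact notMem_empty x
    rw [hA, mem_Aseq] at this
    push_neg at this
    obtain ⟨p, _, hp⟩ := this
    exact ⟨p, hp⟩
  set g : X → Ordinal := fun x => Ordinal.lt_wf.min _ (hgne x) with hg
  have hgnot : ∀ x, x ∉ d (A (g x)) := fun x => Ordinal.lt_wf.min_mem _ (hgne x)
  have hgmin : ∀ x p, p < g x → x ∈ d (A p) := by
    intro x p hp
    by_contra h
    exact Ordinal.lt_wf.not_lt_min _ h hp
  have hgmem : ∀ x, x ∈ A (g x) := by
    intro x
    rw [hA, mem_Aseq]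
    exact fun p hp => hgmin x p hp
  have hmemA : ∀ x o, x ∈ A o → o ≤ g x := by
    intro x o hx
    by_contra h
    push_neg at h
    have : A o ⊆ A (g x + 1) := Aseq_antitone d (Order.succ_le_of_lt h)
    exact hgnot x (Aseq_succ_subset d (g x) (this hx))
  -- the separating set
  refine ⟨{x | x ∉ closure (A (g x) ∩ Hs)}, ?_, ?_, ?_⟩
  · -- HSet
    intro F₀ hF₀
    set B : Set X := {x | x ∉ closure (A (g x) ∩ Hs)} with hB
    set R : Set X := closure (F₀ ∩ B) ∩ closure (F₀ \ B) with hR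
    have hRF₀ : R ⊆ F₀ := fun x hx =>
      hF₀.closure_subset_iff.2 inter_subset_left hx.1
    -- key claim
    have key : ∀ U : Set X, IsOpen U → (F₀ ∩ U).Nonempty → ∃ w ∈ F₀ ∩ U, w ∉ R := by
      intro U hU hne
      -- minimize g over F₀ ∩ U
      have himg : (g '' (F₀ ∩ U)).Nonempty := hne.image g
      set γ := Ordinal.lt_wf.min _ himg with hγ
      obtain ⟨x₀, hx₀, hgx₀⟩ := Ordinal.lt_wf.min_mem _ himg
      have hγle : ∀ y ∈ F₀ ∩ U, γ ≤ g y := by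
        intro y hy
        by_contra h
        push_neg at h
        exact Ordinal.lt_wf.not_lt_min _ (mem_image_of_mem g hy) h
      have hsubγ : F₀ ∩ U ⊆ A γ := fun y hy =>
        Aseq_antitone d (hγle y hy) (hgmem y)
      by_cases hcase : ∃ x ∈ F₀ ∩ U, x ∉ closure (A γ ∩ Hs)
      · obtain ⟨x, hxFU, hxcl⟩ := hcase
        refine ⟨x, hxFU, fun hxR => ?_⟩
        -- x has a neighborhood within F₀ contained in B
        have hVopen : IsOpen (U ∩ (closure (A γ ∩ Hs))ᶜ) := hU.inter isClosed_closure.isOpen_compl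
        have hxV : x ∈ U ∩ (closure (A γ ∩ Hs))ᶜ := ⟨hxFU.2, hxcl⟩
        have hVB : ∀ z ∈ F₀ ∩ (U ∩ (closure (A γ ∩ Hs))ᶜ), z ∈ B := by
          intro z hz
          have hzFU : z ∈ F₀ ∩ U := ⟨hz.1, hz.2.1⟩
          have hsub : A (g z) ⊆ A γ := Aseq_antitone d (hγle z hzFU)
          have : closure (A (g z) ∩ Hs) ⊆ closure (A γ ∩ Hs) :=
            closure_mono (inter_subset_inter_left _ hsub)
          exact fun hmem => hz.2.2 (this hmem)
        have hx2 := hxR.2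
        rw [mem_closure_iff] at hx2
        obtain ⟨z, hzV, hzFB⟩ := hx2 _ hVopen hxV
        exact hzFB.2 (hVB z ⟨hzFB.1, hzV⟩)
      · push_neg at hcase
        refine ⟨x₀, hx₀, fun hxR => ?_⟩
        have hx₀d : x₀ ∉ d (A γ) := by rw [hγ, ← hgx₀]; exact hgnot x₀
        have hx₀E : x₀ ∉ closure (A γ ∩ E) := fun h => hx₀d ⟨h, hcase x₀ hx₀⟩
        have hVopen : IsOpen (U ∩ (closure (A γ ∩ E))ᶜ) := hU.inter isClosed_closure.isOpen_compl
        have hxV : x₀ ∈ U ∩ (closure (A γ ∩ E))ᶜ := ⟨hx₀.2, hx₀E⟩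
        have hVB : ∀ z ∈ F₀ ∩ (U ∩ (closure (A γ ∩ E))ᶜ), z ∉ B := by
          intro z hz
          have hzFU : z ∈ F₀ ∩ U := ⟨hz.1, hz.2.1⟩
          have hgz : g z = γ := by
            refine le_antisymm ?_ (hγle z hzFU)
            by_contra h
            push_neg at h
            exact hz.2.2 (hgmin z γ h).1
          have : z ∈ closure (A (g z) ∩ Hs) := by rw [hgz]; exact hcase z hzFU
          exact fun hzB => hzB this
        have hx1 := hxR.1
        rw [mem_closure_iff] at hx1
        obtain ⟨z, hzV, hzFB⟩ := hx1 _ hVopen hxV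
        exact hVB z ⟨hzFB.1, hzV⟩ hzFB.2
    -- conclude nowhere density
    have hRclosed : IsClosed (Subtype.val ⁻¹' R : Set F₀) :=
      (isClosed_closure.inter isClosed_closure).preimage continuous_subtype_val
    rw [IsNowhereDense, hRclosed.closure_eq]
    rw [eq_empty_iff_forall_notMem]
    rintro ⟨x, hxF₀⟩ hxint
    rw [mem_interior_iff_mem_nhds, nhds_induced, Filter.mem_comap] at hxint
    obtain ⟨t, ht, htsub⟩ := hxint
    rw [mem_nhds_iff] at ht
    obtain ⟨U, hUt, hUopen, hxU⟩ := ht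
    have hne : (F₀ ∩ U).Nonempty := ⟨x, hxF₀, hxU⟩
    obtain ⟨w, hwFU, hwR⟩ := key U hUopen hne
    exact hwR (htsub (hUt hwFU.2 : (⟨w, hwFU.1⟩ : F₀).1 ∈ t))
  · -- f ⁻¹' F ⊆ B
    intro x hx
    have hxE : x ∈ A (g x) ∩ E := ⟨hgmem x, hx⟩
    have : x ∈ closure (A (g x) ∩ E) := subset_closure hxE
    exact fun hmem => hgnot x ⟨this, hmem⟩
  · -- B ⊆ (f ⁻¹' F')ᶜ
    intro x hx hx'
    exact hx (subset_closure ⟨hgmem x, hx'⟩)
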